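/- The probability mass function ρ(u) = 2^{-min(t+1+⌊(u-1)/2^t⌋, 64-p)} on {1, ..., (65-p-t)·2^t} sums to 1. -/

import Mathlib

lemma pmf_rho_key (t : ℕ) : ∀ N : ℕ,
    ∑ u ∈ Finset.range ((N + 1) * 2 ^ t),
      (1 : ℝ) / 2 ^ (min (t + 1 + u / 2 ^ t) (t + N)) = 1 := by
  intro N
  induction N with
  | zero =>
    have h : ∀ u ∈ Finset.range ((0 + 1) * 2 ^ t),
        (1 : ℝ) / 2 ^ (min (t + 1 + u / 2 ^ t) (t + 0)) = 1 / 2 ^ t := by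
      intro u hu
      simp only [Finset.mem_range, Nat.zero_add, one_mul] at hu
      rw [Nat.div_eq_of_lt hu]
      have : min (t + 1 + 0) (t + 0) = t := by omega
      rw [this]
    rw [Finset.sum_congr rfl h, Finset.sum_const]
    simp
  | succ N ih =>
    have hsplit : (N + 1 + 1) * 2 ^ t = 2 ^ t + (N + 1) * 2 ^ t := by ring
    rw [hsplit, Finset.sum_range_add]
    have h1 : ∀ u ∈ Finset.range (2 ^ t),
        (1 : ℝ) / 2 ^ (min (t + 1 + u / 2 ^ t) (t + (N + 1))) = 1 / 2 ^ (t + 1) := by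
      intro u hu
      rw [Finset.mem_range] at hu
      rw [Nat.div_eq_of_lt hu]
      have : min (t + 1 + 0) (t + (N + 1)) = t + 1 := by omega
      rw [this]
    have h2 : ∀ v ∈ Finset.range ((N + 1) * 2 ^ t),
        (1 : ℝ) / 2 ^ (min (t + 1 + (2 ^ t + v) / 2 ^ t) (t + (N + 1)))
          = (1 / 2) * (1 / 2 ^ (min (t + 1 + v / 2 ^ t) (t + N))) := by
      intro v _
      have hdiv : (2 ^ t + v) / 2 ^ t = v / 2 ^ t + 1 := by
        rw [add_comm, Nat.add_div_right _ (Nat.two_pow_pos t)]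
      rw [hdiv]
      have : min (t + 1 + (v / 2 ^ t + 1)) (t + (N + 1))
          = min (t + 1 + v / 2 ^ t) (t + N) + 1 := by omega
      rw [this, pow_succ]
      ring
    rw [Finset.sum_congr rfl h1, Finset.sum_congr rfl h2, Finset.sum_const,
      ← Finset.mul_sum, ih, mul_one]
    rw [Finset.card_range, nsmul_eq_mul]
    push_cast
    rw [pow_succ]
    field_simp
    norm_num

theorem pmf_rho_sums_to_one (p t : ℕ) (hp : 2 ≤ p) (hpt : t + p ≤ 62) :
    ∑ u ∈ Finset.Icc 1 ((65 - p - t) * 2 ^ t),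
      (1 : ℝ) / 2 ^ (min (t + 1 + (u - 1) / 2 ^ t) (64 - p)) = 1 := by
  obtain ⟨N, h1, h2⟩ : ∃ N, 65 - p - t = N + 1 ∧ 64 - p = t + N :=
    ⟨64 - p - t, by omega, by omega⟩
  rw [h1, h2, ← Finset.Ico_add_one_right_eq_Icc, Finset.sum_Ico_eq_sum_range]
  have hb : (N + 1) * 2 ^ t + 1 - 1 = (N + 1) * 2 ^ t := by omega
  rw [hb]
  have h : ∀ i ∈ Finset.range ((N + 1) * 2 ^ t),
      (1 : ℝ) / 2 ^ (min (t + 1 + (1 + i - 1) / 2 ^ t) (t + N))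
        = 1 / 2 ^ (min (t + 1 + i / 2 ^ t) (t + N)) := by
    intro i _
    rw [Nat.add_sub_cancel_left]
  rw [Finset.sum_congr rfl h]
  exact pmf_rho_key t N
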